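/- arXiv:0707.2851 — 3 statements merged into one kernel-verified Lean document; each statement's English description precedes it below -/
import Mathlib

section
/- With A, Ā, X as defined over a commutative ℚ-algebra R, one has z·∑_{m≥1} (X_m/m)·t^m = log A(t); equivalently, substituting the series L(t) = ∑_{m≥1} (z·X_m/m)·t^m (which has zero constant term) into the exponential power series exp gives exp(L(t)) = A(t) = 1 + z·∑_{i≥1} A_i·t^i in R⟦t⟧. -/
open PowerSeries

/-- Composition `exp ∘ L` of the exponential power series with a power series `L`
having zero constant term, defined coefficient-wise: the `n`-th coefficient is
`∑_{k=0}^{n} (1/k!)·(coefficient of tⁿ in L^k)`.  (Since `L` has zero constant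
term, `L^k` contributes nothing to the `n`-th coefficient for `k > n`.) -/
noncomputable def expComp {R : Type*} [CommRing R] [Algebra ℚ R] (L : PowerSeries R) :
    PowerSeries R :=
  PowerSeries.mk fun n =>
    ∑ k ∈ Finset.range (n + 1), ((k.factorial : ℚ)⁻¹) • (PowerSeries.coeff n (L ^ k))

section Aux

variable {R : Type*} [CommRing R] [Algebra ℚ R]

lemma aux_mul_natCast (n : ℕ) (x : R) : x * ((n : ℕ) : R) = ((n : ℕ) : ℚ) • x := by
  rw [show ((n : ℕ) : R) = algebraMap ℚ R ((n : ℕ) : ℚ) by simp, mul_comm, ← Algebra.smul_def]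

lemma aux_smul_mul_natCast (n : ℕ) (hn : n ≠ 0) (q : ℚ) (x : R) :
    (q • x) * ((n : ℕ) : R) = (q * n) • x := by
  rw [aux_mul_natCast, smul_smul, mul_comm (n:ℚ) q]

lemma aux_cancel_natCast (n : ℕ) (hn : n ≠ 0) {x y : R}
    (h : x * ((n : ℕ) : R) = y * ((n : ℕ) : R)) : x = y := by
  have hc : (((n : ℕ) : ℚ)) ≠ 0 := by exact_mod_cast hn
  have h1 : ((n : ℚ))⁻¹ • (x * ((n : ℕ) : R)) = x := by
    rw [aux_mul_natCast, smul_smul, inv_mul_cancel₀ hc, one_smul]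
  have h2 : ((n : ℚ))⁻¹ • (y * ((n : ℕ) : R)) = y := by
    rw [aux_mul_natCast, smul_smul, inv_mul_cancel₀ hc, one_smul]
  rw [← h1, h, h2]

lemma aux_coeff_pow_zero_of_lt (L : R⟦X⟧) (hL : constantCoeff L = 0) {j k : ℕ}
    (hj : j < k) : coeff j (L ^ k) = 0 := by
  have hdvd : (X : R⟦X⟧) ^ k ∣ L ^ k :=
    pow_dvd_pow_of_dvd (X_dvd_iff.mpr hL) k
  exact X_pow_dvd_iff.mp hdvd j hj

lemma aux_X_mul_cancel {f g : R⟦X⟧} (h : (X : R⟦X⟧) * f = X * g) : f = g := by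
  ext n
  have := congrArg (coeff (n + 1)) h
  rwa [coeff_succ_X_mul, coeff_succ_X_mul] at this

/-- The key ODE: `(exp∘L)' = L' · (exp∘L)` for `L` with zero constant term. -/
lemma aux_derivative_expComp (L : R⟦X⟧) (hL : constantCoeff L = 0) :
    d⁄dX R (expComp L) = (d⁄dX R L) * expComp L := by
  ext n
  rw [coeff_derivative]
  have hLHS : coeff (n + 1) (expComp L) * ((n : R) + 1) =
      ∑ k ∈ Finset.range (n + 1), ((k.factorial : ℚ)⁻¹) • coeff n (L ^ k * d⁄dX R L) := by
    rw [expComp, coeff_mk, Finset.sum_mul]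
    have hterm : ∀ k, ((k.factorial : ℚ)⁻¹ • coeff (n+1) (L ^ k)) * ((n : R) + 1) =
        (k.factorial : ℚ)⁻¹ • coeff n (d⁄dX R (L ^ k)) := by
      intro k
      rw [coeff_derivative, smul_mul_assoc]
    simp only [hterm]
    rw [Finset.sum_range_succ']
    have h0 : ((Nat.factorial 0 : ℚ))⁻¹ • coeff n (d⁄dX R (L ^ 0)) = 0 := by
      simp [pow_zero]
    rw [h0, add_zero]
    apply Finset.sum_congr rfl
    intro k _
    have hpow : d⁄dX R (L ^ (k + 1)) = (k + 1) • L ^ k • d⁄dX R L := by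
      have := Derivation.leibniz_pow (d⁄dX R) L (n := k + 1)
      simpa using this
    have h1 : ((k + 1) • (L ^ k • d⁄dX R L) : R⟦X⟧) = (k + 1) • (L ^ k * d⁄dX R L) := by
      rw [smul_eq_mul]
    rw [hpow, h1, map_nsmul, ← Nat.cast_smul_eq_nsmul ℚ, smul_smul]
    congr 1
    rw [Nat.factorial_succ]
    push_cast
    rw [mul_inv]
    field_simp
  rw [hLHS, coeff_mul]
  have hswap : ∀ p ∈ Finset.HasAntidiagonal.antidiagonal n,
      coeff p.1 (d⁄dX R L) * coeff p.2 (expComp L) =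
      ∑ k ∈ Finset.range (n + 1),
        ((k.factorial : ℚ)⁻¹) • (coeff p.1 (d⁄dX R L) * coeff p.2 (L ^ k)) := by
    intro p hp
    rw [Finset.HasAntidiagonal.mem_antidiagonal] at hp
    rw [expComp, coeff_mk]
    have hsub : Finset.range (p.2 + 1) ⊆ Finset.range (n + 1) := by
      apply Finset.range_subset_range.mpr; omega
    rw [← Finset.sum_subset hsub (by
      intro k hk hk2
      have : p.2 < k := by
        simp only [Finset.mem_range] at hk hk2; omega
      rw [aux_coeff_pow_zero_of_lt L hL this, mul_zero, smul_zero])]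
    rw [Finset.mul_sum]
    apply Finset.sum_congr rfl
    intro k _
    rw [mul_smul_comm]
  rw [Finset.sum_congr rfl hswap, Finset.sum_comm]
  apply Finset.sum_congr rfl
  intro k _
  rw [← Finset.smul_sum]
  congr 1
  rw [mul_comm (L ^ k) (d⁄dX R L), coeff_mul]

lemma aux_ode_unique (D E F : R⟦X⟧) (hE : d⁄dX R E = D * E) (hF : d⁄dX R F = D * F)
    (h0 : coeff 0 E = coeff 0 F) : E = F := by
  ext n
  induction n using Nat.strong_induction_on with
  | _ n ih =>
    match n with
    | 0 => exact h0
    | Nat.succ n =>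
      apply aux_cancel_natCast (n + 1) (by omega)
      have hpE : coeff (n + 1) E * (((n+1 : ℕ)) : R) = coeff n (D * E) := by
        rw [← hE, coeff_derivative]; push_cast; ring
      have hpF : coeff (n + 1) F * (((n+1 : ℕ)) : R) = coeff n (D * F) := by
        rw [← hF, coeff_derivative]; push_cast; ring
      rw [hpE, hpF, coeff_mul, coeff_mul]
      apply Finset.sum_congr rfl
      intro p hp
      rw [Finset.HasAntidiagonal.mem_antidiagonal] at hp
      rw [ih p.2 (by omega)]

lemma aux_sum_range_to_Ico (n : ℕ) (f : ℕ → R) (h0 : f 0 = 0) (hn : f (n + 1) = 0) :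
    ∑ k ∈ Finset.range (n + 2), f k = ∑ k ∈ Finset.Ico 1 (n + 1), f k := by
  refine (Finset.sum_subset (fun x hx => ?_) (fun x hx hx2 => ?_)).symm
  · simp only [Finset.mem_Ico] at hx
    simp only [Finset.mem_range]; omega
  · simp only [Finset.mem_range] at hx
    simp only [Finset.mem_Ico, not_and, not_lt] at hx2
    have : x = 0 ∨ x = n + 1 := by omega
    rcases this with h | h
    · rw [h]; exact h0
    · rw [h]; exact hn

end Aux

/-- With `Abar` defined from `A` by the mirror recursion and
`X_m = m·A_m − z·∑_{j=1}^{m−1} j·A_j·Ā_{m−j}`, over a commutative ℚ-algebra `R`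
one has `z·∑_{m≥1} (X_m/m)·t^m = log A(t)`; equivalently, substituting the series
`L(t) = ∑_{m≥1} (z·X_m/m)·t^m` (with zero constant term) into the exponential
series gives `exp(L(t)) = A(t) = 1 + z·∑_{i≥1} A_i·t^i` in `R⟦t⟧`. -/
theorem skein_exp_of_power_sum_series_eq_A {R : Type*} [CommRing R] [Algebra ℚ R]
    (z : R) (A Abar X : ℕ → R)
    (hAbar : ∀ m : ℕ, 1 ≤ m →
      Abar m = A m - z * ∑ k ∈ Finset.Ico 1 m, A k * Abar (m - k))
    (hX : ∀ m : ℕ, 1 ≤ m →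
      X m = (m : R) * A m - z * ∑ j ∈ Finset.Ico 1 m, (j : R) * A j * Abar (m - j)) :
    expComp (PowerSeries.mk fun m => if m = 0 then 0 else ((m : ℚ)⁻¹) • (z * X m)) =
      (PowerSeries.mk fun n => if n = 0 then 1 else z * A n) := by
  set L : R⟦X⟧ := PowerSeries.mk fun m => if m = 0 then 0 else ((m : ℚ)⁻¹) • (z * X m)
    with hLdef
  set α : R⟦X⟧ := PowerSeries.mk fun n => if n = 0 then 1 else z * A n with hadef
  set β : R⟦X⟧ := PowerSeries.mk fun n => if n = 0 then 1 else z * Abar n with hbdef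
  set τ : R⟦X⟧ := PowerSeries.mk fun n => (n : R) * (if n = 0 then 1 else z * A n) with htdef
  set χ : R⟦X⟧ := PowerSeries.mk fun n => if n = 0 then 0 else z * X n with hcdef
  -- recursion (I): β = α - (α-1)*(β-1)
  have hI : β = α - (α - 1) * (β - 1) := by
    ext n
    match n with
    | 0 => simp [hadef, hbdef, coeff_mul]
    | Nat.succ n =>
      rw [map_sub, coeff_mul, Finset.Nat.sum_antidiagonal_eq_sum_range_succ_mk]
      have hterm : ∀ k, coeff k (α - 1) * coeff (n + 1 - k) (β - 1) =
          (if k = 0 then 0 else z * A k) *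
            (if n + 1 - k = 0 then 0 else z * Abar (n + 1 - k)) := by
        intro k
        rw [map_sub, map_sub, coeff_one, coeff_one, hadef, hbdef, coeff_mk, coeff_mk]
        by_cases hk : k = 0 <;> by_cases hk2 : n + 1 - k = 0 <;> simp [hk, hk2]
      simp only [hterm]
      rw [aux_sum_range_to_Ico n _ (by simp) (by simp)]
      have hsum : ∑ k ∈ Finset.Ico 1 (n + 1), (if k = 0 then 0 else z * A k) *
          (if n + 1 - k = 0 then 0 else z * Abar (n + 1 - k))
          = z * (z * ∑ k ∈ Finset.Ico 1 (n + 1), A k * Abar (n + 1 - k)) := by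
        rw [Finset.mul_sum, Finset.mul_sum]
        apply Finset.sum_congr rfl
        intro k hk
        rw [Finset.mem_Ico] at hk
        rw [if_neg (by omega), if_neg (by omega)]
        ring
      rw [hsum, hbdef, hadef, coeff_mk, coeff_mk, if_neg (Nat.succ_ne_zero n),
        if_neg (Nat.succ_ne_zero n), hAbar (n + 1) (by omega)]
      ring
  -- recursion (II): χ = τ - τ*(β-1)
  have hII : χ = τ - τ * (β - 1) := by
    ext n
    match n with
    | 0 => simp [htdef, hcdef, coeff_mul]
    | Nat.succ n =>
      rw [map_sub, coeff_mul, Finset.Nat.sum_antidiagonal_eq_sum_range_succ_mk]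
      have hterm : ∀ k, coeff k τ * coeff (n + 1 - k) (β - 1) =
          ((k : R) * (if k = 0 then 1 else z * A k)) *
            (if n + 1 - k = 0 then 0 else z * Abar (n + 1 - k)) := by
        intro k
        rw [map_sub, coeff_one, htdef, hbdef, coeff_mk, coeff_mk]
        by_cases hk2 : n + 1 - k = 0 <;> simp [hk2]
      simp only [hterm]
      rw [aux_sum_range_to_Ico n _ (by simp) (by simp)]
      have hsum : ∑ k ∈ Finset.Ico 1 (n + 1), ((k : R) * (if k = 0 then 1 else z * A k)) *
          (if n + 1 - k = 0 then 0 else z * Abar (n + 1 - k))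
          = z * (z * ∑ k ∈ Finset.Ico 1 (n + 1), (k : R) * A k * Abar (n + 1 - k)) := by
        rw [Finset.mul_sum, Finset.mul_sum]
        apply Finset.sum_congr rfl
        intro k hk
        rw [Finset.mem_Ico] at hk
        rw [if_neg (by omega), if_neg (by omega)]
        ring
      rw [hsum, hcdef, htdef, coeff_mk, coeff_mk, if_neg (Nat.succ_ne_zero n),
        if_neg (Nat.succ_ne_zero n), hX (n + 1) (by omega)]
      push_cast
      ring
  -- algebra: α*β = 2α - 1, then α*χ = τ
  have h2 : α * β = 2 * α - 1 := by linear_combination hI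
  have h3 : α * χ = τ := by linear_combination α * hII - τ * h2
  -- τ = X * α', χ = X * L'
  have hτ : τ = (PowerSeries.X : R⟦X⟧) * d⁄dX R α := by
    ext n
    match n with
    | 0 =>
      rw [htdef, coeff_mk]
      simp [coeff_mul]
    | Nat.succ n =>
      rw [coeff_succ_X_mul, coeff_derivative, htdef, hadef, coeff_mk, coeff_mk]
      push_cast; ring
  have hχ : χ = (PowerSeries.X : R⟦X⟧) * d⁄dX R L := by
    ext n
    match n with
    | 0 =>
      rw [hcdef, coeff_mk]
      simp [coeff_mul]
    | Nat.succ n =>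
      rw [coeff_succ_X_mul, coeff_derivative, hcdef, hLdef, coeff_mk, coeff_mk,
        if_neg (Nat.succ_ne_zero n), if_neg (Nat.succ_ne_zero n)]
      rw [show ((n : R) + 1) = (((n + 1 : ℕ)) : R) by push_cast; ring]
      rw [aux_smul_mul_natCast (n + 1) (by omega), inv_mul_cancel₀ (by positivity), one_smul]
  -- derive α' = L' * α
  have hd : d⁄dX R α = d⁄dX R L * α := by
    rw [hχ, hτ] at h3
    have : (PowerSeries.X : R⟦X⟧) * (α * d⁄dX R L) = PowerSeries.X * d⁄dX R α := by
      linear_combination h3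
    have h4 := aux_X_mul_cancel this
    rw [← h4]; ring
  -- initial conditions
  have hL0 : constantCoeff L = 0 := by
    rw [hLdef]; simp [PowerSeries.constantCoeff_mk]
  have h0 : coeff 0 (expComp L) = coeff 0 α := by
    rw [expComp, coeff_mk, hadef, coeff_mk]
    simp
  exact aux_ode_unique (d⁄dX R L) (expComp L) α (aux_derivative_expComp L hL0) hd h0
end

section
/- With A, Ā, X as defined over a commutative ℚ-algebra R, for every m ≥ 1 one has X_m = m·∑_{c ⊨ m} ((−z)^{ℓ(c)−1}/ℓ(c))·A_{c_1}·A_{c_2}⋯A_{c_{ℓ(c)}}, the sum being over all compositions c of m. Equivalently, grouping compositions with the same underlying partition, X_m = m·∑_{λ ⊢ m} (k_λ/l)·(−z)^{l−1}·A_λ, where l is the length of λ. -/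
open Finset

namespace SkeinAux3

lemma blocks_ne_nil {m : ℕ} (hm : 1 ≤ m) (c : Composition m) : c.blocks ≠ [] := by
  intro h
  have hs := c.blocks_sum
  rw [h] at hs
  simp at hs
  omega

lemma one_le_length {m : ℕ} (hm : 1 ≤ m) (c : Composition m) : 1 ≤ c.length := by
  have h := blocks_ne_nil hm c
  have : c.blocks.length ≠ 0 := fun h0 => h (List.eq_nil_of_length_eq_zero h0)
  simp only [Composition.length]
  omega

lemma comp_zero_blocks (c : Composition 0) : c.blocks = [] := by
  cases h : c.blocks with
  | nil => rfl
  | cons b t =>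
    have hb : 0 < b := c.blocks_pos (h ▸ List.mem_cons_self (a := b) (l := t))
    have hs := c.blocks_sum
    rw [h] at hs
    simp at hs
    omega

instance : Unique (Composition 0) where
  default := ⟨[], by intro i hi; simp at hi, rfl⟩
  uniq c := by
    apply Composition.ext
    simp [comp_zero_blocks c]

/-- The "cons" map realizing `Composition (n+1)` from first block and rest. -/
def consMap (n : ℕ) (x : Σ j : Fin (n + 1), Composition (n - j.val)) : Composition (n + 1) where
  blocks := (x.1.val + 1) :: x.2.blocks
  blocks_pos := by
    intro i hi
    rcases List.mem_cons.1 hi with h | h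
    · omega
    · exact x.2.blocks_pos h
  blocks_sum := by
    have := x.2.blocks_sum
    have := x.1.isLt
    simp only [List.sum_cons, this]
    omega

lemma consMap_bijective (n : ℕ) : Function.Bijective (consMap n) := by
  constructor
  · rintro ⟨⟨j, hj⟩, c⟩ ⟨⟨j', hj'⟩, c'⟩ h
    have hb : (j + 1) :: c.blocks = (j' + 1) :: c'.blocks := congrArg Composition.blocks h
    rw [List.cons_eq_cons] at hb
    obtain ⟨h1, h2⟩ := hb
    have hjj : j = j' := by omega
    subst hjj
    have : c = c' := Composition.ext h2
    subst this
    rfl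
  · intro c
    have hne := blocks_ne_nil (by omega) c
    obtain ⟨b, t, hbt⟩ := List.exists_cons_of_ne_nil hne
    have hbpos : 0 < b := c.blocks_pos (hbt ▸ List.mem_cons_self (a := b) (l := t))
    have hsum := c.blocks_sum
    rw [hbt, List.sum_cons] at hsum
    have hble : b ≤ n + 1 := by omega
    refine ⟨⟨⟨b - 1, by omega⟩, ⟨t, fun hi => c.blocks_pos (hbt ▸ List.mem_cons_of_mem _ hi),
      by show t.sum = n - (b - 1); omega⟩⟩, ?_⟩
    apply Composition.ext
    simp only [consMap, hbt]
    congr 1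
    omega

lemma comp_sum_cast {M : Type*} [AddCommMonoid M] {a b : ℕ} (h : a = b) (g : List ℕ → M) :
    ∑ c : Composition a, g c.blocks = ∑ c : Composition b, g c.blocks := by subst h; rfl

lemma comp_sum_decomp {M : Type*} [AddCommMonoid M] (n : ℕ) (f : List ℕ → M) :
    ∑ c : Composition (n + 1), f c.blocks
      = f [n + 1] + ∑ k ∈ Finset.Ico 1 (n + 1), ∑ c : Composition (n + 1 - k), f (k :: c.blocks) := by
  have h1 : ∑ c : Composition (n + 1), f c.blocks
      = ∑ x : Σ j : Fin (n + 1), Composition (n - j.val), f ((x.1.val + 1) :: x.2.blocks) :=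
    (Fintype.sum_bijective _ (consMap_bijective n) _ _ (fun x => rfl)).symm
  rw [h1, ← Finset.univ_sigma_univ, Finset.sum_sigma]
  have h2 : ∀ j : Fin (n + 1),
      (∑ c : Composition (n - j.val), f ((j.val + 1) :: c.blocks))
        = ∑ c : Composition (n + 1 - (j.val + 1)), f ((j.val + 1) :: c.blocks) :=
    fun j => comp_sum_cast (by omega) (fun bl => f ((j.val + 1) :: bl))
  rw [Finset.sum_congr rfl (fun j _ => h2 j)]
  set G : ℕ → M := fun k => ∑ c : Composition (n + 1 - k), f (k :: c.blocks) with hG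
  have h6 : ∑ j : Fin (n + 1), (∑ c : Composition (n + 1 - (j.val + 1)), f ((j.val + 1) :: c.blocks))
      = ∑ j ∈ Finset.range (n + 1), G (j + 1) := Fin.sum_univ_eq_sum_range (fun j => G (j + 1)) (n + 1)
  rw [h6, Finset.sum_range_succ]
  have h5 : G (n + 1) = f [n + 1] := by
    show (∑ c : Composition (n + 1 - (n + 1)), f ((n + 1) :: c.blocks)) = f [n + 1]
    rw [comp_sum_cast (show n + 1 - (n + 1) = 0 by omega) (fun bl => f ((n + 1) :: bl))]
    rw [Fintype.sum_unique]
    simp [comp_zero_blocks]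
  have h7 : ∑ k ∈ Finset.Ico 1 (n + 1), G k = ∑ j ∈ Finset.range n, G (1 + j) := by
    rw [Finset.sum_Ico_eq_sum_range]
    norm_num
  have h8 : ∑ j ∈ Finset.range n, G (1 + j) = ∑ j ∈ Finset.range n, G (j + 1) :=
    Finset.sum_congr rfl (fun j _ => by rw [add_comm])
  rw [h7, h8, ← h5]
  exact add_comm _ _

end SkeinAux3

namespace SkeinAux3

/-- Rotation of a composition's blocks. -/
def rot {m : ℕ} (k : ℕ) (c : Composition m) : Composition m where
  blocks := c.blocks.rotate k
  blocks_pos := fun {i} hi => c.blocks_pos (((List.rotate_perm c.blocks k).mem_iff).1 hi)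
  blocks_sum := (List.rotate_perm c.blocks k).sum_eq.trans c.blocks_sum

@[simp] lemma rot_blocks {m : ℕ} (k : ℕ) (c : Composition m) :
    (rot k c).blocks = c.blocks.rotate k := rfl

@[simp] lemma rot_length {m : ℕ} (k : ℕ) (c : Composition m) :
    (rot k c).length = c.length := List.length_rotate _ _

lemma rot_rot_eq {m : ℕ} {l k k' : ℕ} (hkl : k + k' = l) (c : Composition m)
    (hc : c.length = l) : rot k' (rot k c) = c := by
  apply Composition.ext
  simp only [rot_blocks, List.rotate_rotate, hkl]
  have : c.blocks.length = l := hc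
  rw [← this, List.rotate_length]

lemma headI_eq_iget_head? (l : List ℕ) : l.headI = l.head?.iget := by cases l <;> rfl

lemma sum_headI_rotate (bl : List ℕ) :
    ∑ k ∈ Finset.range bl.length, (bl.rotate k).headI = bl.sum := by
  rw [← Fin.sum_univ_eq_sum_range (fun k => (bl.rotate k).headI) bl.length]
  rw [← Fin.sum_univ_getElem bl]
  apply Finset.sum_congr rfl
  intro i _
  rw [headI_eq_iget_head?, List.head?_rotate i.isLt, List.getElem?_eq_getElem i.isLt]

end SkeinAux3

namespace SkeinAux3

variable {R : Type*} [CommRing R]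

lemma Abar_eq (z : R) (A Abar : ℕ → R)
    (hAbar : ∀ m : ℕ, 1 ≤ m →
      Abar m = A m - z * ∑ k ∈ Finset.Ico 1 m, A k * Abar (m - k)) :
    ∀ m : ℕ, 1 ≤ m →
      Abar m = ∑ c : Composition m, (-z) ^ (c.length - 1) * (c.blocks.map A).prod := by
  intro m
  induction m using Nat.strong_induction_on with
  | _ m IH =>
    intro hm
    obtain ⟨n, rfl⟩ : ∃ n, m = n + 1 := ⟨m - 1, by omega⟩
    rw [hAbar _ hm]
    have hsum : (∑ c : Composition (n + 1), (-z) ^ (c.length - 1) * ((c.blocks.map A).prod))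
        = ∑ c : Composition (n + 1),
            (fun bl : List ℕ => (-z) ^ (bl.length - 1) * ((bl.map A).prod)) c.blocks := rfl
    rw [hsum, comp_sum_decomp n (fun bl : List ℕ => (-z) ^ (bl.length - 1) * ((bl.map A).prod))]
    have hk : ∀ k ∈ Finset.Ico 1 (n + 1),
        (∑ c : Composition (n + 1 - k),
            (fun bl : List ℕ => (-z) ^ (bl.length - 1) * ((bl.map A).prod)) (k :: c.blocks))
          = -z * (A k * Abar (n + 1 - k)) := by
      intro k hk
      rw [Finset.mem_Ico] at hk
      have hrec : Abar (n + 1 - k)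
          = ∑ c : Composition (n + 1 - k), (-z) ^ (c.length - 1) * (c.blocks.map A).prod :=
        IH (n + 1 - k) (by omega) (by omega)
      calc (∑ c : Composition (n + 1 - k),
              (fun bl : List ℕ => (-z) ^ (bl.length - 1) * ((bl.map A).prod)) (k :: c.blocks))
          = ∑ c : Composition (n + 1 - k),
              -z * (A k * ((-z) ^ (c.length - 1) * (c.blocks.map A).prod)) := by
            apply Finset.sum_congr rfl
            intro c _
            have h1 : 1 ≤ c.length := one_le_length (by omega) c
            have h2 : (k :: c.blocks).length - 1 = (c.length - 1) + 1 := by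
              simp only [List.length_cons]
              show c.blocks.length + 1 - 1 = c.blocks.length - 1 + 1
              have : 1 ≤ c.blocks.length := h1
              omega
            simp only [h2, pow_succ, List.map_cons, List.prod_cons]
            ring
        _ = -z * (A k * ∑ c : Composition (n + 1 - k),
              (-z) ^ (c.length - 1) * (c.blocks.map A).prod) := by
            rw [Finset.mul_sum, Finset.mul_sum]
        _ = -z * (A k * Abar (n + 1 - k)) := by rw [← hrec]
    rw [Finset.sum_congr rfl hk, ← Finset.mul_sum]
    simp only [List.length_cons, List.length_nil, List.map_cons, List.map_nil, List.prod_cons,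
      List.prod_nil, pow_zero, one_mul, mul_one, Nat.add_sub_cancel]
    ring

lemma X_head (z : R) (A Abar X : ℕ → R)
    (hAbar : ∀ m : ℕ, 1 ≤ m →
      Abar m = A m - z * ∑ k ∈ Finset.Ico 1 m, A k * Abar (m - k))
    (hX : ∀ m : ℕ, 1 ≤ m →
      X m = (m : R) * A m - z * ∑ j ∈ Finset.Ico 1 m, (j : R) * A j * Abar (m - j)) :
    ∀ m : ℕ, 1 ≤ m →
      X m = ∑ c : Composition m,
        (c.blocks.headI : R) * ((-z) ^ (c.length - 1) * (c.blocks.map A).prod) := by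
  intro m hm
  obtain ⟨n, rfl⟩ : ∃ n, m = n + 1 := ⟨m - 1, by omega⟩
  rw [hX _ hm]
  have hsum : (∑ c : Composition (n + 1),
        (c.blocks.headI : R) * ((-z) ^ (c.length - 1) * (c.blocks.map A).prod))
      = ∑ c : Composition (n + 1),
          (fun bl : List ℕ => (bl.headI : R) * ((-z) ^ (bl.length - 1) * ((bl.map A).prod)))
            c.blocks := rfl
  rw [hsum, comp_sum_decomp n
    (fun bl : List ℕ => (bl.headI : R) * ((-z) ^ (bl.length - 1) * ((bl.map A).prod)))]
  have hk : ∀ k ∈ Finset.Ico 1 (n + 1),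
      (∑ c : Composition (n + 1 - k),
          (fun bl : List ℕ => (bl.headI : R) * ((-z) ^ (bl.length - 1) * ((bl.map A).prod)))
            (k :: c.blocks))
        = -z * ((k : R) * A k * Abar (n + 1 - k)) := by
    intro k hk
    rw [Finset.mem_Ico] at hk
    have hrec : Abar (n + 1 - k)
        = ∑ c : Composition (n + 1 - k), (-z) ^ (c.length - 1) * (c.blocks.map A).prod :=
      Abar_eq z A Abar hAbar (n + 1 - k) (by omega)
    calc (∑ c : Composition (n + 1 - k),
            (fun bl : List ℕ => (bl.headI : R) * ((-z) ^ (bl.length - 1) * ((bl.map A).prod)))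
              (k :: c.blocks))
        = ∑ c : Composition (n + 1 - k),
            -z * ((k : R) * A k * ((-z) ^ (c.length - 1) * (c.blocks.map A).prod)) := by
          apply Finset.sum_congr rfl
          intro c _
          have h1 : 1 ≤ c.length := one_le_length (by omega) c
          have h2 : (k :: c.blocks).length - 1 = (c.length - 1) + 1 := by
            simp only [List.length_cons]
            show c.blocks.length + 1 - 1 = c.blocks.length - 1 + 1
            have : 1 ≤ c.blocks.length := h1
            omega
          simp only [h2, pow_succ, List.map_cons, List.prod_cons, List.headI_cons]
          ring
      _ = -z * ((k : R) * A k * ∑ c : Composition (n + 1 - k),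
            (-z) ^ (c.length - 1) * (c.blocks.map A).prod) := by
          rw [Finset.mul_sum, Finset.mul_sum]
      _ = -z * ((k : R) * A k * Abar (n + 1 - k)) := by rw [← hrec]
  rw [Finset.sum_congr rfl hk, ← Finset.mul_sum]
  simp only [List.length_cons, List.length_nil, List.map_cons, List.map_nil, List.prod_cons,
    List.prod_nil, pow_zero, one_mul, mul_one, Nat.add_sub_cancel, List.headI_cons]
  push_cast
  ring

end SkeinAux3

namespace SkeinAux3

lemma head_sum_eq {R : Type*} [CommRing R] [Algebra ℚ R] (z : R) (A : ℕ → R)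
    {m : ℕ} (hm : 1 ≤ m) :
    ∑ c : Composition m, (c.blocks.headI : R) * ((-z) ^ (c.length - 1) * (c.blocks.map A).prod)
      = (m : R) * ∑ c : Composition m,
          ((c.length : ℚ)⁻¹) • ((-z) ^ (c.length - 1) * (c.blocks.map A).prod) := by
  classical
  set w : Composition m → R := fun c => (-z) ^ (c.length - 1) * (c.blocks.map A).prod with hw
  have wrot : ∀ (k : ℕ) (c : Composition m), w (rot k c) = w c := by
    intro k c
    have hp : ((rot k c).blocks.map A).prod = (c.blocks.map A).prod :=
      (((List.rotate_perm c.blocks k).map A).prod_eq)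
    simp only [hw, rot_length, hp]
  -- the fiberwise identity
  have fiber_key : ∀ l : ℕ,
      ∑ c ∈ Finset.univ.filter (fun c : Composition m => c.length = l),
          (c.blocks.headI : R) * w c
        = ∑ c ∈ Finset.univ.filter (fun c : Composition m => c.length = l),
            ((m : ℚ) / (l : ℚ)) • w c := by
    intro l
    rcases Nat.eq_zero_or_pos l with rfl | hl
    · have hempty : Finset.univ.filter (fun c : Composition m => c.length = 0) = ∅ := by
        rw [Finset.filter_eq_empty_iff]
        intro c _
        have := one_le_length hm c
        omega
      rw [hempty]
      simp
    · set fl := Finset.univ.filter (fun c : Composition m => c.length = l) with hfl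
      have hmem : ∀ (k : ℕ), ∀ c ∈ fl, rot k c ∈ fl := by
        intro k c hc
        rw [hfl, Finset.mem_filter] at hc ⊢
        exact ⟨Finset.mem_univ _, by rw [rot_length]; exact hc.2⟩
      have key : ∀ k ∈ Finset.range l,
          (∑ c ∈ fl, ((rot k c).blocks.headI : R) * w c)
            = ∑ c ∈ fl, (c.blocks.headI : R) * w c := by
        intro k hk
        rw [Finset.mem_range] at hk
        refine Finset.sum_nbij' (rot k) (rot (l - k)) (hmem k) (hmem (l - k)) ?_ ?_ ?_
        · intro c hc
          exact rot_rot_eq (by omega) c (Finset.mem_filter.1 hc).2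
        · intro c hc
          exact rot_rot_eq (by omega) c (Finset.mem_filter.1 hc).2
        · intro c hc
          rw [wrot]
      have hsum : (l : ℚ) • (∑ c ∈ fl, (c.blocks.headI : R) * w c)
          = ∑ c ∈ fl, (m : R) * w c := by
        rw [Nat.cast_smul_eq_nsmul]
        calc l • (∑ c ∈ fl, (c.blocks.headI : R) * w c)
            = ∑ _k ∈ Finset.range l, ∑ c ∈ fl, (c.blocks.headI : R) * w c := by
              rw [Finset.sum_const, Finset.card_range]
          _ = ∑ k ∈ Finset.range l, ∑ c ∈ fl, ((rot k c).blocks.headI : R) * w c :=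
              Finset.sum_congr rfl (fun k hk => (key k hk).symm)
          _ = ∑ c ∈ fl, ∑ k ∈ Finset.range l, ((rot k c).blocks.headI : R) * w c :=
              Finset.sum_comm
          _ = ∑ c ∈ fl, (m : R) * w c := by
              apply Finset.sum_congr rfl
              intro c hc
              have hcl : c.blocks.length = l := (Finset.mem_filter.1 hc).2
              simp only [rot_blocks]
              rw [← Finset.sum_mul]
              congr 1
              rw [← Nat.cast_sum]
              rw [show (Finset.range l) = Finset.range c.blocks.length by rw [hcl]]
              rw [sum_headI_rotate, c.blocks_sum]
      have hlQ : (l : ℚ) ≠ 0 := by positivity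
      have hS : ∑ c ∈ fl, (c.blocks.headI : R) * w c
          = (l : ℚ)⁻¹ • ∑ c ∈ fl, (m : R) * w c := by
        rw [← hsum, smul_smul, inv_mul_cancel₀ hlQ, one_smul]
      rw [hS, Finset.smul_sum]
      apply Finset.sum_congr rfl
      intro c _
      rw [div_eq_mul_inv, mul_comm (m : ℚ), mul_smul]
      congr 1
      rw [show ((m : ℚ)) = (((m : ℕ) : ℚ)) from rfl, Nat.cast_smul_eq_nsmul, nsmul_eq_mul]
  -- assemble fibers
  have maps : ∀ c : Composition m, c ∈ Finset.univ → c.length ∈ Finset.range (m + 1) :=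
    fun c _ => Finset.mem_range.mpr (Nat.lt_succ_of_le c.length_le)
  have glob : ∑ c : Composition m, (c.blocks.headI : R) * w c
      = ∑ c : Composition m, ((m : ℚ) / (c.length : ℚ)) • w c := by
    rw [← Finset.sum_fiberwise_of_maps_to maps (fun c => (c.blocks.headI : R) * w c),
        ← Finset.sum_fiberwise_of_maps_to maps (fun c => ((m : ℚ) / (c.length : ℚ)) • w c)]
    apply Finset.sum_congr rfl
    intro l _
    rw [fiber_key l]
    apply Finset.sum_congr rfl
    intro c hc
    rw [(Finset.mem_filter.1 hc).2]
  rw [glob, Finset.mul_sum]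
  apply Finset.sum_congr rfl
  intro c _
  rw [div_eq_mul_inv, mul_smul]
  rw [show ((m : ℚ)) = (((m : ℕ) : ℚ)) from rfl, Nat.cast_smul_eq_nsmul, nsmul_eq_mul]

end SkeinAux3



/-- With `Abar` defined from `A` by the mirror recursion and
`X_m = m·A_m − z·∑_{j=1}^{m−1} j·A_j·Ā_{m−j}`, over a commutative ℚ-algebra `R`
one has, for every `m ≥ 1`,
`X_m = m·∑_{c ⊨ m} ((−z)^{ℓ(c)−1}/ℓ(c))·A_{c_1}⋯A_{c_{ℓ(c)}}`, summed over all
compositions `c` of `m` (equivalently, grouping compositions with the same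
underlying partition, `X_m = m·∑_{λ ⊢ m} (k_λ/l)·(−z)^{l−1}·A_λ`). -/
theorem skein_Xm_in_Turaev_basis {R : Type*} [CommRing R] [Algebra ℚ R]
    (z : R) (A Abar X : ℕ → R)
    (hAbar : ∀ m : ℕ, 1 ≤ m →
      Abar m = A m - z * ∑ k ∈ Finset.Ico 1 m, A k * Abar (m - k))
    (hX : ∀ m : ℕ, 1 ≤ m →
      X m = (m : R) * A m - z * ∑ j ∈ Finset.Ico 1 m, (j : R) * A j * Abar (m - j)) :
    ∀ m : ℕ, 1 ≤ m →
      X m = (m : R) * ∑ c : Composition m,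
        ((c.length : ℚ)⁻¹) • ((-z) ^ (c.length - 1) * (c.blocks.map A).prod) := by
  intro m hm
  rw [SkeinAux3.X_head z A Abar X hAbar hX m hm]
  exact SkeinAux3.head_sum_eq z A hm
end

section
/- For every m ≥ 1 one has ∑_{i+j=m, i,j≥0} (−1)^j·s^{i−j}·h_i·e_j = (s − s⁻¹)·∑_{a+b=m−1, a,b≥0} (−1)^b·s^{a−b}·S_{(a|b)}. (In the Homfly skein of the annulus, where z·A_m = ∑_{i+j=m}(−1)^j s^{i−j} h_i e_j with z = s−s⁻¹, this says that the closed braid A_m equals ∑_{a+b=m−1} (−1)^b·s^{a−b}·Q_{(a|b)}, an alternating sum of the hook Schur elements.) -/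
/-- The hook Schur element `S_{(a|b)} = ∑_{k=0}^{b} (−1)^k·h_{a+1+k}·e_{b−k}`
for `a, b ≥ 0` (the Schur function of the hook partition `(a|b)` of `a+b+1`),
and `S_{(a|b)} = 0` if `a < 0` or `b < 0`. -/
def Shook {R : Type*} [CommRing R] (h e : ℕ → R) (a b : ℤ) : R :=
  if 0 ≤ a ∧ 0 ≤ b then
    ∑ k ∈ Finset.range (b.toNat + 1), (-1) ^ k * h (a.toNat + 1 + k) * e (b.toNat - k)
  else 0

/-- For every `m ≥ 1`,
`∑_{i+j=m} (−1)^j·s^{i−j}·h_i·e_j = (s − s⁻¹)·∑_{a+b=m−1} (−1)^b·s^{a−b}·S_{(a|b)}`,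
where `s` is a unit with inverse `si`, and `h, e` satisfy `h_0 = e_0 = 1` and
`∑_{i+j=n} (−1)^j·h_i·e_j = 0` for all `n ≥ 1` (i.e. `H(t)·E(−t) = 1`).  In the
skein this says `z·A_m = (s−s⁻¹)·∑_{a+b=m−1} (−1)^b s^{a−b} Q_{(a|b)}`. -/
theorem A_as_alternating_sum_of_hooks {R : Type*} [CommRing R] (s si : R)
    (hs : s * si = 1) (h e : ℕ → R) (h0 : h 0 = 1) (e0 : e 0 = 1)
    (hrel : ∀ n : ℕ, 1 ≤ n →
      ∑ p ∈ Finset.HasAntidiagonal.antidiagonal n, (-1) ^ p.2 * h p.1 * e p.2 = 0) :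
    ∀ m : ℕ, 1 ≤ m →
      ∑ p ∈ Finset.HasAntidiagonal.antidiagonal m, (-1) ^ p.2 * s ^ p.1 * si ^ p.2 * h p.1 * e p.2 =
        (s - si) * ∑ p ∈ Finset.HasAntidiagonal.antidiagonal (m - 1),
          (-1) ^ p.2 * s ^ p.1 * si ^ p.2 * Shook h e (p.1 : ℤ) (p.2 : ℤ) := by

  have tele : ∀ (i j : ℕ), (s - si) * ∑ k ∈ Finset.range i, s ^ (i - 1 - k) * si ^ (j + k)
      = s ^ i * si ^ j - si ^ (i + j) := by
    intro i
    induction i with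
    | zero => intro j; simp
    | succ n ih =>
      intro j
      rw [Finset.sum_range_succ']
      have hc : ∀ k ∈ Finset.range n,
          s ^ (n + 1 - 1 - (k + 1)) * si ^ (j + (k + 1))
            = s ^ (n - 1 - k) * si ^ ((j + 1) + k) := by
        intro k hk
        congr 2 <;> omega
      rw [Finset.sum_congr rfl hc, mul_add, ih (j + 1)]
      simp only [Nat.add_sub_cancel, Nat.sub_zero, Nat.add_zero]
      ring
  intro m hm
  obtain ⟨n, rfl⟩ : ∃ n, m = n + 1 := ⟨m - 1, (Nat.succ_pred_eq_of_pos hm).symm⟩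
  have hS : ∀ (a b : ℕ), Shook h e (a : ℤ) (b : ℤ)
      = ∑ k ∈ Finset.range (b + 1), (-1) ^ k * h (a + 1 + k) * e (b - k) := by
    intro a b; simp [Shook]
  simp only [Nat.add_sub_cancel, hS]
  have key : ∑ p ∈ Finset.HasAntidiagonal.antidiagonal n, (-1 : R) ^ p.2 * s ^ p.1 * si ^ p.2 *
        ∑ k ∈ Finset.range (p.2 + 1), (-1) ^ k * h (p.1 + 1 + k) * e (p.2 - k)
      = ∑ p ∈ Finset.HasAntidiagonal.antidiagonal (n + 1), (-1 : R) ^ p.2 * h p.1 * e p.2 *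
        ∑ k ∈ Finset.range p.1, s ^ (p.1 - 1 - k) * si ^ (p.2 + k) := by
    simp only [Finset.mul_sum]
    rw [Finset.sum_sigma', Finset.sum_sigma']
    apply Finset.sum_nbij' (fun x => ⟨(x.1.1 + 1 + x.2, x.1.2 - x.2), x.2⟩)
      (fun x => ⟨(x.1.1 - 1 - x.2, x.1.2 + x.2), x.2⟩)
    · rintro ⟨⟨a, b⟩, k⟩ hx
      simp only [Finset.mem_sigma, Finset.HasAntidiagonal.mem_antidiagonal, Finset.mem_range] at hx ⊢
      omega
    · rintro ⟨⟨i, j⟩, k⟩ hx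
      simp only [Finset.mem_sigma, Finset.HasAntidiagonal.mem_antidiagonal, Finset.mem_range] at hx ⊢
      omega
    · rintro ⟨⟨a, b⟩, k⟩ hx
      simp only [Finset.mem_sigma, Finset.HasAntidiagonal.mem_antidiagonal, Finset.mem_range] at hx
      have h1 : a + 1 + k - 1 - k = a := by omega
      have h2 : b - k + k = b := by omega
      simp [h1, h2]
    · rintro ⟨⟨i, j⟩, k⟩ hx
      simp only [Finset.mem_sigma, Finset.HasAntidiagonal.mem_antidiagonal, Finset.mem_range] at hx
      have h1 : i - 1 - k + 1 + k = i := by omega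
      have h2 : j + k - k = j := by omega
      simp [h1, h2]
    · rintro ⟨⟨a, b⟩, k⟩ hx
      simp only [Finset.mem_sigma, Finset.HasAntidiagonal.mem_antidiagonal, Finset.mem_range] at hx
      obtain ⟨hab, hk⟩ := hx
      dsimp only
      have h1 : a + 1 + k - 1 - k = a := by omega
      have h2 : b - k + k = b := by omega
      have h3 : (-1 : R) ^ b = (-1) ^ (b - k) * (-1) ^ k := by rw [← pow_add, h2]
      rw [h1, h2, h3]; ring_nf
      rw [pow_mul', neg_one_sq, one_pow, mul_one]
  rw [key, Finset.mul_sum]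
  have step : ∀ p ∈ Finset.HasAntidiagonal.antidiagonal (n + 1),
      (s - si) * ((-1 : R) ^ p.2 * h p.1 * e p.2 *
        ∑ k ∈ Finset.range p.1, s ^ (p.1 - 1 - k) * si ^ (p.2 + k))
      = (-1) ^ p.2 * s ^ p.1 * si ^ p.2 * h p.1 * e p.2
          - si ^ (n + 1) * ((-1) ^ p.2 * h p.1 * e p.2) := by
    rintro ⟨i, j⟩ hp
    simp only [Finset.HasAntidiagonal.mem_antidiagonal] at hp
    dsimp only
    calc (s - si) * ((-1 : R) ^ j * h i * e j *
            ∑ k ∈ Finset.range i, s ^ (i - 1 - k) * si ^ (j + k))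
        = (-1 : R) ^ j * h i * e j *
            ((s - si) * ∑ k ∈ Finset.range i, s ^ (i - 1 - k) * si ^ (j + k)) := by ring
      _ = (-1 : R) ^ j * h i * e j * (s ^ i * si ^ j - si ^ (i + j)) := by rw [tele i j]
      _ = _ := by rw [hp]; ring
  rw [Finset.sum_congr rfl step, Finset.sum_sub_distrib, ← Finset.mul_sum,
    hrel (n + 1) (by omega), mul_zero, sub_zero]
end
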